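/- Let r > 0 and let Ω₁ denote the set of bounded injective holomorphic functions ζ : D(0, r) → ℂ with ζ(0) = 0, equipped with the sup norm. Fix ζ₀ ∈ Ω₁ with ζ₀'(0) ≠ 0, and set 3ρ := inf_{|z| = r/2} |ζ₀(z)| > 0. Then there exist constants C, S > 0 such that for all ξ ∈ ℂ with |ξ| < ρ and all ζ₁, ζ₂ ∈ Ω₁ with ‖ζ_j - ζ₀‖_∞ < S, the preimages z_j = ζ_j⁻¹(ξ) (in D(0, r/2)) exist and satisfy |z₁ - z₂| ≤ C · ‖ζ₁ - ζ₂‖_∞. -/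

import Mathlib

open Metric Set Complex Filter Asymptotics Topology
set_option maxHeartbeats 1000000


/-- An injective holomorphic function on an open set has nonvanishing derivative. -/
lemma aux_deriv_ne_zero {f : ℂ → ℂ} {U : Set ℂ} (hU : IsOpen U)
    (hd : DifferentiableOn ℂ f U) (hi : InjOn f U) {z₀ : ℂ} (hz : z₀ ∈ U) :
    deriv f z₀ ≠ 0 := by
  intro h0
  have hA : AnalyticAt ℂ f z₀ := hd.analyticAt (hU.mem_nhds hz)
  set g : ℂ → ℂ := fun z => f z - f z₀ with hgdef
  have hg : AnalyticAt ℂ g z₀ := hA.sub analyticAt_const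
  -- `g` is not eventually zero near `z₀` (else injectivity fails trivially)
  have hnev : ¬ ∀ᶠ z in 𝓝 z₀, g z = 0 := by
    intro hev
    obtain ⟨t, ht, hts⟩ := Metric.mem_nhds_iff.mp (hev.and (hU.mem_nhds hz))
    have hmem : z₀ + (t / 2 : ℝ) ∈ ball z₀ t := by
      simp only [mem_ball, dist_eq, add_sub_cancel_left]
      rw [Complex.norm_real, Real.norm_eq_abs]
      rw [abs_of_pos (by linarith)]
      linarith
    obtain ⟨hgz, hUz⟩ := hts hmem
    have : z₀ + (t / 2 : ℝ) = z₀ := hi hUz hz (by simpa [hgdef, sub_eq_zero] using hgz)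
    have : ((t / 2 : ℝ) : ℂ) = 0 := by linear_combination this
    have : (t / 2 : ℝ) = 0 := by exact_mod_cast this
    linarith
  -- extract the finite order `k` of vanishing of `g`
  have hord : analyticOrderAt g z₀ ≠ ⊤ := fun h => hnev (analyticOrderAt_eq_top.mp h)
  obtain ⟨k, hk⟩ := WithTop.ne_top_iff_exists.mp hord
  obtain ⟨h, hh, hh0, hfeq⟩ := (hg.analyticOrderAt_eq_natCast (n := k)).mp hk.symm
  -- k ≠ 0
  have hk0 : k ≠ 0 := by
    intro h'
    have := hfeq.self_of_nhds
    simp [h', hgdef] at this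
    exact hh0 this.symm
  -- k ≠ 1
  have hk1 : k ≠ 1 := by
    intro h'
    subst h'
    have hD : HasDerivAt (fun z => (z - z₀) ^ 1 • h z) (h z₀) z₀ := by
      have h1 : HasDerivAt (fun z : ℂ => z - z₀) 1 z₀ := (hasDerivAt_id z₀).sub_const z₀
      have h2 : HasDerivAt h (deriv h z₀) z₀ := hh.differentiableAt.hasDerivAt
      have := h1.mul h2
      simpa [Pi.mul_def] using this
    have : deriv g z₀ = h z₀ := by
      rw [Filter.EventuallyEq.deriv_eq hfeq]
      exact hD.deriv
    have hgz : deriv g z₀ = 0 := by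
      rw [hgdef]
      simp [deriv_sub_const, h0]
    exact hh0 (by rw [← this, hgz])
  have hk2 : 2 ≤ k := by omega
  -- a k-th root of `h` near `z₀`
  have hkc : (k : ℂ) ≠ 0 := Nat.cast_ne_zero.mpr hk0
  set c : ℂ := exp (log (h z₀) / k) with hcdef
  have hcne : c ≠ 0 := exp_ne_zero _
  have hck : c ^ k = h z₀ := by
    rw [hcdef, ← exp_nat_mul, mul_div_cancel₀ _ hkc, exp_log hh0]
  set φ : ℂ → ℂ := fun z => c * exp (log (h z / h z₀) / k) with hφdef
  have hφA : AnalyticAt ℂ φ z₀ := by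
    apply analyticAt_const.mul
    apply AnalyticAt.cexp
    apply AnalyticAt.div _ analyticAt_const hkc
    apply AnalyticAt.clog (hh.div analyticAt_const hh0)
    simp [div_self hh0]
  have hφ0 : φ z₀ = c := by
    simp [hφdef, div_self hh0, Complex.log_one]
  have hφk : ∀ᶠ z in 𝓝 z₀, φ z ^ k = h z := by
    filter_upwards [hh.continuousAt.eventually_ne hh0] with z hz
    rw [hφdef]
    simp only
    rw [mul_pow, hck, ← exp_nat_mul, mul_div_cancel₀ _ hkc,
      exp_log (div_ne_zero hz hh0), mul_div_cancel₀ _ hh0]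
  set ψ : ℂ → ℂ := fun z => (z - z₀) * φ z with hψdef
  have hψeq : ∀ᶠ z in 𝓝 z₀, g z = ψ z ^ k := by
    filter_upwards [hfeq, hφk] with z h1 h2
    rw [h1, smul_eq_mul, ← h2, hψdef]
    simp [mul_pow]
  have hψ0 : ψ z₀ = 0 := by simp [hψdef]
  -- strict derivative of ψ at z₀ is c ≠ 0
  have hφs : HasStrictDerivAt φ (fderiv ℂ φ z₀ 1) z₀ :=
    hφA.hasStrictFDerivAt.hasStrictDerivAt
  have hψs : HasStrictDerivAt ψ c z₀ := by
    have h1 : HasStrictDerivAt (fun z : ℂ => z - z₀) 1 z₀ :=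
      (hasStrictDerivAt_id z₀).sub_const z₀
    have := h1.mul hφs
    have h2 : 1 * φ z₀ + (z₀ - z₀) * fderiv ℂ φ z₀ 1 = c := by
      rw [hφ0]; ring
    rw [h2] at this
    exact this
  -- local inverse
  have F := hψs.hasStrictFDerivAt_equiv hcne
  set inv := F.localInverse ψ _ z₀ with hinvdef
  have hinv0 : inv 0 = z₀ := by
    rw [← hψ0]; exact F.localInverse_apply_image
  have hev2 : ∀ᶠ y in 𝓝 (0 : ℂ), ψ (inv y) = y ∧ inv y ∈ U ∧ g (inv y) = ψ (inv y) ^ k := by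
    have e1 := F.eventually_right_inverse
    rw [hψ0] at e1
    have hWmem : {z | z ∈ U ∧ g z = ψ z ^ k} ∈ 𝓝 z₀ :=
      Filter.inter_mem (hU.mem_nhds hz) hψeq
    have hcont : ContinuousAt inv (0 : ℂ) := by
      have := F.localInverse_continuousAt
      rwa [hψ0] at this
    have e2 : ∀ᶠ y in 𝓝 (0 : ℂ), inv y ∈ {z | z ∈ U ∧ g z = ψ z ^ k} := by
      apply hcont.eventually_mem
      rwa [hinv0]
    filter_upwards [e1, e2] with y hy1 hy2
    exact ⟨hy1, hy2.1, hy2.2⟩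
  obtain ⟨δ, hδ, hδs⟩ := Metric.eventually_nhds_iff.mp hev2
  set t : ℝ := δ / 2 with htdef
  have ht : 0 < t := by positivity
  have htne : ((t : ℝ) : ℂ) ≠ 0 := by
    simp only [ne_eq, ofReal_eq_zero]; linarith
  set θ : ℝ := 2 * Real.pi / k with hθdef
  set ω : ℂ := exp (θ * I) with hωdef
  have hπ := Real.pi_pos
  have hkR : (2 : ℝ) ≤ k := by exact_mod_cast hk2
  have hωabs : ‖ω‖ = 1 := norm_exp_ofReal_mul_I θ
  have hωk : ω ^ k = 1 := by
    rw [hωdef, ← exp_nat_mul]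
    have : (k : ℂ) * (θ * I) = 2 * Real.pi * I := by
      rw [hθdef]
      push_cast
      field_simp
    rw [this, exp_two_pi_mul_I]
  have hω1 : ω ≠ 1 := by
    rw [hωdef, Ne, exp_eq_one_iff]
    rintro ⟨n, hn⟩
    have him : θ = (n : ℝ) * (2 * Real.pi) := by
      have := congrArg Complex.im hn
      simpa using this
    have hθpos : 0 < θ := by
      rw [hθdef]; positivity
    have hθlt : θ < 2 * Real.pi := by
      rw [hθdef, div_lt_iff₀ (by linarith : (0:ℝ) < k)]
      nlinarith
    have h1 : (0 : ℝ) < n := by nlinarith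
    have h2 : (n : ℝ) < 1 := by nlinarith
    have h3 : (0 : ℤ) < n := by exact_mod_cast h1
    have h4 : n < 1 := by exact_mod_cast h2
    omega
  have hy₁ : dist ((t : ℝ) : ℂ) 0 < δ := by
    simp only [dist_zero_right, Complex.norm_real, Real.norm_eq_abs, abs_of_pos ht]
    rw [htdef]; linarith
  have hy₂ : dist (ω * t) 0 < δ := by
    simp only [dist_zero_right, norm_mul, hωabs, one_mul,
      Complex.norm_real, Real.norm_eq_abs, abs_of_pos ht]
    rw [htdef]; linarith
  obtain ⟨hr₁, hU₁, hg₁⟩ := hδs hy₁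
  obtain ⟨hr₂, hU₂, hg₂⟩ := hδs hy₂
  set a := inv ((t : ℝ) : ℂ) with hadef
  set b := inv (ω * t) with hbdef
  have hga : g a = ((t : ℝ) : ℂ) ^ k := by rw [hg₁, hr₁]
  have hgb : g b = ((t : ℝ) : ℂ) ^ k := by
    rw [hg₂, hr₂, mul_pow, hωk, one_mul]
  have hab : f a = f b := by
    have := hga.trans hgb.symm
    rw [hgdef] at this
    simp only at this
    linear_combination this
  have hne : a ≠ b := by
    intro h
    have heq : ((t : ℝ) : ℂ) = ω * ((t : ℝ) : ℂ) :=
      hr₁.symm.trans ((congrArg ψ h).trans hr₂)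
    have : ω = 1 := by
      have h1 : ω * ((t : ℝ) : ℂ) = 1 * ((t : ℝ) : ℂ) := by rw [one_mul, ← heq]
      exact mul_right_cancel₀ htne h1
    exact hω1 this
  exact hne (hi hU₁ hU₂ hab)

/-- Uniform inverse-Lipschitz lower bound on the closed half-ball. -/
lemma aux_lower {r : ℝ} (hr : 0 < r) {f : ℂ → ℂ}
    (hd : DifferentiableOn ℂ f (ball (0 : ℂ) r)) (hi : InjOn f (ball (0 : ℂ) r)) :
    ∃ c > 0, ∀ a ∈ closedBall (0 : ℂ) (r / 2), ∀ b ∈ closedBall (0 : ℂ) (r / 2),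
      c * ‖a - b‖ ≤ ‖f a - f b‖ := by
  have hKb : closedBall (0 : ℂ) (r / 2) ⊆ ball (0 : ℂ) r := by
    apply closedBall_subset_ball; linarith
  have hK : IsCompact (closedBall (0 : ℂ) (r / 2)) := isCompact_closedBall _ _
  -- Step 1: local bounds
  have step1 : ∀ z : ℂ, ∃ δ > 0, ∃ cz > 0,
      z ∈ closedBall (0 : ℂ) (r / 2) →
      ∀ a ∈ ball z δ, ∀ b ∈ ball z δ,
        cz * ‖a - b‖ ≤ ‖f a - f b‖ := by
    intro z
    by_cases hzK : z ∈ closedBall (0 : ℂ) (r / 2)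
    swap
    · exact ⟨1, one_pos, 1, one_pos, fun h => absurd h hzK⟩
    have hzB : z ∈ ball (0 : ℂ) r := hKb hzK
    have hdz : deriv f z ≠ 0 := aux_deriv_ne_zero isOpen_ball hd hi hzB
    have hA : AnalyticAt ℂ f z := hd.analyticAt (isOpen_ball.mem_nhds hzB)
    have hs : HasStrictDerivAt f (deriv f z) z := by
      have := hA.hasStrictFDerivAt.hasStrictDerivAt
      rwa [fderiv_apply_one_eq_deriv] at this
    have hd2 : 0 < ‖deriv f z‖ / 2 := by
      have : 0 < ‖deriv f z‖ := norm_pos_iff.mpr hdz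
      linarith
    have hev := hs.isLittleO.def hd2
    obtain ⟨δ, hδ, hδs⟩ := Metric.mem_nhds_iff.mp hev
    refine ⟨δ, hδ, ‖deriv f z‖ / 2, hd2, fun _ => ?_⟩
    intro a ha b hb
    have hpair : (a, b) ∈ ball (z, z) δ := by
      rw [← ball_prod_same]
      exact ⟨ha, hb⟩
    have hB : ‖f a - f b - (a - b) * deriv f z‖ ≤
        ‖deriv f z‖ / 2 * ‖a - b‖ := by
      have := hδs hpair
      simpa [ContinuousLinearMap.smulRight_apply,
        ContinuousLinearMap.one_apply, smul_eq_mul] using this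
    have h2 : ‖(a - b) * deriv f z‖ - ‖f a - f b‖ ≤ ‖(a - b) * deriv f z - (f a - f b)‖ :=
      norm_sub_norm_le _ _
    rw [norm_sub_rev] at h2
    simp only [norm_mul] at h2
    have e1 : ‖f b - f a‖ = ‖f a - f b‖ := norm_sub_rev _ _
    have e2 : ‖(a - b) * deriv f z - (f a - f b)‖ =
        ‖f a - f b - (a - b) * deriv f z‖ := norm_sub_rev _ _
    nlinarith [norm_nonneg (a - b)]
  choose δf hδf czf hczf hloc using step1
  -- finite subcover of `K` by half-radius balls
  obtain ⟨T, hTK, hTfin, hTcov⟩ := hK.elim_finite_subcover_image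
    (fun z (_ : z ∈ closedBall (0 : ℂ) (r / 2)) => isOpen_ball (x := z) (ε := δf z / 2))
    (fun z hz => mem_biUnion hz (mem_ball_self (by linarith [hδf z])))
  have h0K : (0 : ℂ) ∈ closedBall (0 : ℂ) (r / 2) := mem_closedBall_self (by linarith)
  obtain ⟨z', hz'T, _⟩ := mem_iUnion₂.mp (hTcov h0K)
  have hFne : hTfin.toFinset.Nonempty := ⟨z', hTfin.mem_toFinset.mpr hz'T⟩
  set δ₀ : ℝ := hTfin.toFinset.inf' hFne (fun z => δf z / 2) with hδ₀def
  set c₁ : ℝ := hTfin.toFinset.inf' hFne czf with hc₁def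
  have hδ₀ : 0 < δ₀ := by
    rw [hδ₀def, Finset.lt_inf'_iff]
    intro z _; linarith [hδf z]
  have hc₁ : 0 < c₁ := by
    rw [hc₁def, Finset.lt_inf'_iff]
    intro z _; exact hczf z
  -- near pairs
  have hnear : ∀ a ∈ closedBall (0 : ℂ) (r / 2), ∀ b ∈ closedBall (0 : ℂ) (r / 2),
      dist a b < δ₀ → c₁ * ‖a - b‖ ≤ ‖f a - f b‖ := by
    intro a ha b hb hab
    obtain ⟨z, hzT, haz⟩ := mem_iUnion₂.mp (hTcov ha)
    have hzF : z ∈ hTfin.toFinset := hTfin.mem_toFinset.mpr hzT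
    have hδle : δ₀ ≤ δf z / 2 := Finset.inf'_le _ hzF
    have hcle : c₁ ≤ czf z := Finset.inf'_le _ hzF
    have ha' : a ∈ ball z (δf z) := by
      rw [mem_ball] at haz ⊢; linarith [hδf z]
    have hb' : b ∈ ball z (δf z) := by
      rw [mem_ball] at haz ⊢
      calc dist b z ≤ dist b a + dist a z := dist_triangle _ _ _
        _ < δ₀ + δf z / 2 := by rw [dist_comm b a]; linarith
        _ ≤ δf z := by linarith
    calc c₁ * ‖a - b‖ ≤ czf z * ‖a - b‖ :=
          mul_le_mul_of_nonneg_right hcle (norm_nonneg _)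
      _ ≤ ‖f a - f b‖ := hloc z (hTK hzT) a ha' b hb'
  -- far pairs via compactness
  set P : Set (ℂ × ℂ) := {p | p.1 ∈ closedBall (0 : ℂ) (r / 2) ∧
    p.2 ∈ closedBall (0 : ℂ) (r / 2) ∧ δ₀ ≤ dist p.1 p.2} with hPdef
  have hfK : ContinuousOn f (closedBall (0 : ℂ) (r / 2)) :=
    (hd.continuousOn).mono hKb
  have hPc : IsCompact P := by
    apply (hK.prod hK).of_isClosed_subset
    · have h1 : IsClosed {p : ℂ × ℂ | p.1 ∈ closedBall (0 : ℂ) (r / 2)} :=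
        IsClosed.preimage continuous_fst isClosed_closedBall
      have h2 : IsClosed {p : ℂ × ℂ | p.2 ∈ closedBall (0 : ℂ) (r / 2)} :=
        IsClosed.preimage continuous_snd isClosed_closedBall
      have h3 : IsClosed {p : ℂ × ℂ | δ₀ ≤ dist p.1 p.2} :=
        isClosed_le continuous_const (continuous_fst.dist continuous_snd)
      have : P = ({p : ℂ × ℂ | p.1 ∈ closedBall (0 : ℂ) (r / 2)} ∩
          {p : ℂ × ℂ | p.2 ∈ closedBall (0 : ℂ) (r / 2)}) ∩
          {p : ℂ × ℂ | δ₀ ≤ dist p.1 p.2} := by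
        ext p; simp [hPdef, and_assoc]
      rw [this]
      exact (h1.inter h2).inter h3
    · intro p hp; exact ⟨hp.1, hp.2.1⟩
  have hcontP : ContinuousOn (fun p : ℂ × ℂ => ‖f p.1 - f p.2‖) P := by
    apply continuous_norm.comp_continuousOn
    apply ContinuousOn.sub
    · exact hfK.comp continuous_fst.continuousOn (fun p hp => hp.1)
    · exact hfK.comp continuous_snd.continuousOn (fun p hp => hp.2.1)
  by_cases hPe : P.Nonempty
  · obtain ⟨p₀, hp₀, hmin⟩ := hPc.exists_isMinOn hPe hcontP
    set m : ℝ := ‖f p₀.1 - f p₀.2‖ with hmdef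
    have hm : 0 < m := by
      have hne12 : p₀.1 ≠ p₀.2 := by
        intro h
        have := hp₀.2.2
        rw [h, dist_self] at this
        linarith
      have : f p₀.1 ≠ f p₀.2 := fun h => hne12 (hi (hKb hp₀.1) (hKb hp₀.2.1) h)
      have : f p₀.1 - f p₀.2 ≠ 0 := sub_ne_zero_of_ne this
      exact norm_pos_iff.mpr this
    refine ⟨min c₁ (m / r), lt_min hc₁ (div_pos hm hr), ?_⟩
    intro a ha b hb
    by_cases hab : dist a b < δ₀
    · calc min c₁ (m / r) * ‖a - b‖ ≤ c₁ * ‖a - b‖ :=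
          mul_le_mul_of_nonneg_right (min_le_left _ _) (norm_nonneg _)
        _ ≤ ‖f a - f b‖ := hnear a ha b hb hab
    · push_neg at hab
      have hPab : (a, b) ∈ P := ⟨ha, hb, hab⟩
      have hmle := hmin hPab
      have habr : ‖a - b‖ ≤ r := by
        rw [← Complex.dist_eq]
        calc dist a b ≤ dist a 0 + dist 0 b := dist_triangle _ _ _
          _ ≤ r / 2 + r / 2 := by
              rw [dist_comm (0 : ℂ) b]
              exact add_le_add (mem_closedBall.mp ha) (mem_closedBall.mp hb)
          _ = r := by ring
      calc min c₁ (m / r) * ‖a - b‖ ≤ (m / r) * ‖a - b‖ :=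
          mul_le_mul_of_nonneg_right (min_le_right _ _) (norm_nonneg _)
        _ ≤ (m / r) * r := by
            apply mul_le_mul_of_nonneg_left habr
            positivity
        _ = m := by field_simp
        _ ≤ ‖f a - f b‖ := hmle
  · refine ⟨c₁, hc₁, ?_⟩
    intro a ha b hb
    by_cases hab : dist a b < δ₀
    · exact hnear a ha b hb hab
    · push_neg at hab
      exact absurd ⟨(a, b), ha, hb, hab⟩ hPe

/-- Cauchy-estimate Lipschitz bound: a holomorphic function bounded by `M` on `ball 0 r`
is `(4M/r)`-Lipschitz on `closedBall 0 (r/2)`. -/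
lemma aux_cauchy {r M : ℝ} (hr : 0 < r) {h : ℂ → ℂ}
    (hd : DifferentiableOn ℂ h (ball (0 : ℂ) r))
    (hM : ∀ z ∈ ball (0 : ℂ) r, ‖h z‖ ≤ M) :
    ∀ a ∈ closedBall (0 : ℂ) (r / 2), ∀ b ∈ closedBall (0 : ℂ) (r / 2),
      ‖h a - h b‖ ≤ 4 * M / r * ‖a - b‖ := by
  have hKb : closedBall (0 : ℂ) (r / 2) ⊆ ball (0 : ℂ) r :=
    closedBall_subset_ball (by linarith)
  have hder : ∀ z ∈ closedBall (0 : ℂ) (r / 2), ‖deriv h z‖ ≤ 4 * M / r := by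
    intro z hz
    have hsub : closedBall z (r / 4) ⊆ ball (0 : ℂ) r := by
      intro w hw
      rw [mem_closedBall] at hw
      rw [mem_ball]
      calc dist w 0 ≤ dist w z + dist z 0 := dist_triangle _ _ _
        _ ≤ r / 4 + r / 2 := add_le_add hw (mem_closedBall.mp hz)
        _ < r := by linarith
    have hdc : DiffContOnCl ℂ h (ball z (r / 4)) := by
      apply DifferentiableOn.diffContOnCl
      rw [closure_ball z (by positivity : (r / 4 : ℝ) ≠ 0)]
      exact hd.mono (fun w hw => hsub hw)
    have := norm_deriv_le_of_forall_mem_sphere_norm_le (by positivity : (0:ℝ) < r / 4) hdc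
      (C := M) (fun w hw => by
        exact hM w (hsub (sphere_subset_closedBall hw)))
    calc ‖deriv h z‖ ≤ M / (r / 4) := this
      _ = 4 * M / r := by field_simp
  intro a ha b hb
  have hdiff : ∀ x ∈ closedBall (0 : ℂ) (r / 2), DifferentiableAt ℂ h x :=
    fun x hx => (hd.differentiableAt (isOpen_ball.mem_nhds (hKb hx)))
  have := (convex_closedBall (0 : ℂ) (r / 2)).norm_image_sub_le_of_norm_deriv_le
    hdiff hder hb ha
  simpa [Complex.dist_eq] using this

/-- Existence of a preimage in the open half-ball, via the quantitative open mapping theorem. -/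
lemma aux_exists {r ρ : ℝ} (hr : 0 < r) (hρ : 0 < ρ) {f : ℂ → ℂ}
    (hd : DifferentiableOn ℂ f (ball (0 : ℂ) r)) (hi : InjOn f (ball (0 : ℂ) r))
    (h0 : f 0 = 0)
    (hsph : ∀ z ∈ sphere (0 : ℂ) (r / 2), 2 * ρ ≤ ‖f z‖)
    {ξ : ℂ} (hξ : ‖ξ‖ < ρ) :
    ∃ z ∈ ball (0 : ℂ) (r / 2), f z = ξ := by
  have hKb : closedBall (0 : ℂ) (r / 2) ⊆ ball (0 : ℂ) r :=
    closedBall_subset_ball (by linarith)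
  have hdc : DiffContOnCl ℂ f (ball (0 : ℂ) (r / 2)) := by
    apply DifferentiableOn.diffContOnCl
    rw [closure_ball (0 : ℂ) (by positivity : (r / 2 : ℝ) ≠ 0)]
    exact hd.mono hKb
  have hfreq : ∃ᶠ z in 𝓝 (0 : ℂ), f z ≠ f 0 := by
    rw [Filter.frequently_iff]
    intro V hV
    obtain ⟨t, ht, hts⟩ := Metric.mem_nhds_iff.mp
      (Filter.inter_mem hV (isOpen_ball.mem_nhds (mem_ball_self hr)))
    set w : ℂ := ((t / 2 : ℝ) : ℂ) with hwdef
    have hw : w ∈ ball (0 : ℂ) t := by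
      simp only [hwdef, mem_ball, dist_zero_right, Complex.norm_real, Real.norm_eq_abs]
      rw [abs_of_pos (by linarith)]
      linarith
    obtain ⟨hwV, hwB⟩ := hts hw
    refine ⟨w, hwV, fun hfw => ?_⟩
    have : w = 0 := hi hwB (mem_ball_self hr) (by rw [hfw, h0])
    rw [hwdef] at this
    have : (t / 2 : ℝ) = 0 := by exact_mod_cast this
    linarith
  have hlow : ∀ z ∈ sphere (0 : ℂ) (r / 2), 2 * ρ ≤ ‖f z - f 0‖ := by
    intro z hz
    rw [h0, sub_zero]
    exact hsph z hz
  have himg := hdc.ball_subset_image_closedBall (by positivity) hlow hfreq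
  have hξ' : ξ ∈ ball (f 0) (2 * ρ / 2) := by
    rw [h0, mem_ball, Complex.dist_eq, sub_zero]
    linarith
  obtain ⟨z, hz, hfz⟩ := himg hξ'
  refine ⟨z, ?_, hfz⟩
  rw [mem_ball, Complex.dist_eq, sub_zero]
  rcases lt_or_eq_of_le (by simpa [Complex.dist_eq] using mem_closedBall.mp hz) with h | h
  · exact h
  · exfalso
    have : 2 * ρ ≤ ‖f z‖ := hsph z (by simp [mem_sphere, Complex.dist_eq, h])
    rw [hfz] at this
    linarith


/-- Lemma A.1: the evaluation of the inverse function at a point is locally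
    Lipschitz, in the sup norm, on the space of bounded univalent functions on D(0,r)
    fixing the origin. -/
theorem stmt14 (r : ℝ) (hr : 0 < r) (ζ₀ : ℂ → ℂ)
    (hζ₀d : DifferentiableOn ℂ ζ₀ (ball (0 : ℂ) r))
    (hζ₀i : InjOn ζ₀ (ball (0 : ℂ) r))
    (hζ₀0 : ζ₀ 0 = 0)
    (hζ₀b : ∃ B, ∀ z ∈ ball (0 : ℂ) r, ‖ζ₀ z‖ ≤ B)
    (hζ₀' : deriv ζ₀ 0 ≠ 0)
    (ρ : ℝ) (hρ : 0 < ρ)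
    (hρ3 : ∀ z : ℂ, ‖z‖ = r / 2 → 3 * ρ ≤ ‖ζ₀ z‖) :
    ∃ C > 0, ∃ S > 0, ∀ ξ : ℂ, ‖ξ‖ < ρ →
      ∀ ζ₁ ζ₂ : ℂ → ℂ,
        DifferentiableOn ℂ ζ₁ (ball (0 : ℂ) r) → InjOn ζ₁ (ball (0 : ℂ) r) → ζ₁ 0 = 0 →
        DifferentiableOn ℂ ζ₂ (ball (0 : ℂ) r) → InjOn ζ₂ (ball (0 : ℂ) r) → ζ₂ 0 = 0 →
        (∀ z ∈ ball (0 : ℂ) r, dist (ζ₁ z) (ζ₀ z) < S) →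
        (∀ z ∈ ball (0 : ℂ) r, dist (ζ₂ z) (ζ₀ z) < S) →
        ∃ z₁ ∈ ball (0 : ℂ) (r / 2), ∃ z₂ ∈ ball (0 : ℂ) (r / 2),
          ζ₁ z₁ = ξ ∧ ζ₂ z₂ = ξ ∧
          ∀ ε : ℝ, 0 ≤ ε → (∀ z ∈ ball (0 : ℂ) r, dist (ζ₁ z) (ζ₂ z) ≤ ε) →
            dist z₁ z₂ ≤ C * ε := by
  obtain ⟨c, hc, hlow⟩ := aux_lower hr hζ₀d hζ₀i
  set S : ℝ := min ρ (c * r / 8) with hSdef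
  have hS : 0 < S := lt_min hρ (by positivity)
  have hSρ : S ≤ ρ := min_le_left _ _
  have hScr : S ≤ c * r / 8 := min_le_right _ _
  refine ⟨2 / c, by positivity, S, hS, ?_⟩
  intro ξ hξ ζ₁ ζ₂ h1d h1i h10 h2d h2i h20 h1S h2S
  have hKb : closedBall (0 : ℂ) (r / 2) ⊆ ball (0 : ℂ) r :=
    closedBall_subset_ball (by linarith)
  have hsub : sphere (0 : ℂ) (r / 2) ⊆ ball (0 : ℂ) r := fun z hz => by
    rw [mem_sphere, Complex.dist_eq, sub_zero] at hz
    rw [mem_ball, Complex.dist_eq, sub_zero, hz]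
    linarith
  -- lower bounds on the sphere for ζ₁ and ζ₂
  have hsph : ∀ g : ℂ → ℂ, (∀ z ∈ ball (0 : ℂ) r, dist (g z) (ζ₀ z) < S) →
      ∀ z ∈ sphere (0 : ℂ) (r / 2), 2 * ρ ≤ ‖g z‖ := by
    intro g hgS z hz
    have h3 : 3 * ρ ≤ ‖ζ₀ z‖ := by
      apply hρ3
      rw [mem_sphere, Complex.dist_eq, sub_zero] at hz
      exact hz
    have hd1 : ‖g z - ζ₀ z‖ < S := by
      rw [← Complex.dist_eq]
      exact hgS z (hsub hz)
    have htri : ‖ζ₀ z‖ - ‖g z‖ ≤ ‖ζ₀ z - g z‖ := by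
      simpa using norm_sub_norm_le (ζ₀ z) (g z)
    rw [norm_sub_rev] at htri
    linarith
  obtain ⟨z₁, hz₁, hfz₁⟩ := aux_exists hr hρ h1d h1i h10 (hsph ζ₁ h1S) hξ
  obtain ⟨z₂, hz₂, hfz₂⟩ := aux_exists hr hρ h2d h2i h20 (hsph ζ₂ h2S) hξ
  refine ⟨z₁, hz₁, z₂, hz₂, hfz₁, hfz₂, ?_⟩
  intro ε hε hεb
  have hz₁' : z₁ ∈ closedBall (0 : ℂ) (r / 2) := ball_subset_closedBall hz₁
  have hz₂' : z₂ ∈ closedBall (0 : ℂ) (r / 2) := ball_subset_closedBall hz₂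
  -- |ζ₂ z₁ - ζ₂ z₂| ≤ ε
  have kb1 : ‖ζ₂ z₁ - ζ₂ z₂‖ ≤ ε := by
    rw [hfz₂, ← hfz₁]
    have := hεb z₁ (hKb hz₁')
    rw [Complex.dist_eq] at this
    rw [norm_sub_rev]
    exact this
  -- Cauchy estimate for ζ₀ - ζ₂
  have hC := aux_cauchy hr (hζ₀d.sub h2d)
    (M := S) (fun z hz => by
      have := h2S z hz
      rw [Complex.dist_eq] at this
      rw [Pi.sub_apply, norm_sub_rev]
      linarith) z₁ hz₁' z₂ hz₂'
  have hC' : ‖(ζ₀ z₁ - ζ₂ z₁) - (ζ₀ z₂ - ζ₂ z₂)‖ ≤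
      4 * S / r * ‖z₁ - z₂‖ := hC
  -- lower bound
  have key : c * ‖z₁ - z₂‖ ≤ ‖ζ₀ z₁ - ζ₀ z₂‖ := hlow z₁ hz₁' z₂ hz₂'
  have tri : ‖ζ₀ z₁ - ζ₀ z₂‖ ≤
      ‖ζ₂ z₁ - ζ₂ z₂‖ + ‖(ζ₀ z₁ - ζ₂ z₁) - (ζ₀ z₂ - ζ₂ z₂)‖ := by
    have heq : ζ₀ z₁ - ζ₀ z₂ = (ζ₂ z₁ - ζ₂ z₂) + ((ζ₀ z₁ - ζ₂ z₁) - (ζ₀ z₂ - ζ₂ z₂)) := by ring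
    rw [heq]
    exact norm_add_le _ _
  have hdnn : 0 ≤ ‖z₁ - z₂‖ := norm_nonneg _
  have hS2' : 4 * S / r ≤ c / 2 := by
    rw [div_le_div_iff₀ hr (by norm_num : (0:ℝ) < 2)]
    nlinarith
  have hS2 : 4 * S / r * ‖z₁ - z₂‖ ≤ c / 2 * ‖z₁ - z₂‖ :=
    mul_le_mul_of_nonneg_right hS2' hdnn
  have hhalf : c / 2 * ‖z₁ - z₂‖ ≤ ε := by nlinarith
  rw [Complex.dist_eq]
  calc ‖z₁ - z₂‖ = 2 / c * (c / 2 * ‖z₁ - z₂‖) := by field_simp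
    _ ≤ 2 / c * ε := by
        apply mul_le_mul_of_nonneg_left hhalf
        positivity
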